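/- Let Ω be a bounded connected open set in ℝⁿ and L a uniformly elliptic divergence-form operator as above. Suppose v, w ∈ C²(Ω) ∩ C(Ω̄) satisfy Lv ≥ Lw and Lw < 0 in Ω, and w > 0 on Ω̄. Then sup_Ω (v/w) ≤ max{ sup_{∂Ω}(v⁺/w), 1 }. -/

import Mathlib

open Real Set Filter Topology Matrix
open scoped MatrixOrder


lemma deriv2_nonpos_of_localmax {f g : ℝ → ℝ} {c : ℝ}
    (hf : ∀ᶠ t in 𝓝 (0:ℝ), HasDerivAt f (g t) t)
    (hg : HasDerivAt g c 0) (hmax : IsLocalMax f 0) : c ≤ 0 := by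
  by_contra hc
  push_neg at hc
  have hg0 : g 0 = 0 := hmax.hasDerivAt_eq_zero hf.self_of_nhds
  have hslope : Tendsto (slope g 0) (𝓝[≠] (0:ℝ)) (𝓝 c) :=
    hasDerivAt_iff_tendsto_slope.1 hg
  have hpos : ∀ᶠ t in 𝓝[≠] (0:ℝ), 0 < slope g 0 t :=
    hslope.eventually (eventually_gt_nhds hc)
  -- turn eventually statements into a δ
  have hposn : ∀ᶠ t in 𝓝 (0:ℝ), t ≠ 0 → 0 < slope g 0 t := by
    rwa [eventually_nhdsWithin_iff] at hpos
  obtain ⟨δ, hδ, hball⟩ := Metric.eventually_nhds_iff.1 ((hf.and hposn).and hmax)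
  set t₀ : ℝ := δ / 2 with ht₀
  have ht₀pos : 0 < t₀ := by positivity
  have ht₀δ : t₀ < δ := by simpa [ht₀] using half_lt_self hδ
  have hmem : ∀ t ∈ Icc (0:ℝ) t₀, dist t (0:ℝ) < δ := by
    intro t ht
    rw [Real.dist_eq, sub_zero, abs_of_nonneg ht.1]
    exact lt_of_le_of_lt ht.2 ht₀δ
  have hcont : ContinuousOn f (Icc (0:ℝ) t₀) := by
    intro t ht
    exact ((hball (hmem t ht)).1.1.continuousAt).continuousWithinAt
  have hderiv : ∀ t ∈ interior (Icc (0:ℝ) t₀), 0 < deriv f t := by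
    intro t ht
    rw [interior_Icc] at ht
    have hd : dist t (0:ℝ) < δ := hmem t ⟨ht.1.le, ht.2.le⟩
    have hslopet : 0 < slope g 0 t := (hball hd).1.2 (ne_of_gt ht.1)
    have : 0 < g t := by
      have := hslopet
      rw [slope_def_field] at this
      have h' : 0 < g t / t := by simpa [hg0] using this
      have := (div_pos_iff).1 h'
      rcases this with ⟨h1, _⟩ | ⟨_, h2⟩
      · exact h1
      · linarith [ht.1]
    rwa [(hball hd).1.1.deriv]
  have hmono := strictMonoOn_of_deriv_pos (convex_Icc (0:ℝ) t₀) hcont hderiv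
  have h1 : f 0 < f t₀ := hmono ⟨le_refl 0, ht₀pos.le⟩ ⟨ht₀pos.le, le_refl t₀⟩ ht₀pos
  have h2 : f t₀ ≤ f 0 := (hball (hmem t₀ ⟨ht₀pos.le, le_refl t₀⟩)).2
  linarith

lemma quadform_nonpos_of_localmax {E : Type*} [NormedAddCommGroup E] [NormedSpace ℝ E]
    {u : E → ℝ} {x₀ : E} (hu : ContDiffAt ℝ 2 u x₀) (hmax : IsLocalMax u x₀) (ξ : E) :
    fderiv ℝ (fderiv ℝ u) x₀ ξ ξ ≤ 0 := by
  set L : ℝ → E := fun t => x₀ + t • ξ with hL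
  have hL0 : L 0 = x₀ := by simp [hL]
  have hLd : ∀ t : ℝ, HasDerivAt L ξ t := by
    intro t
    simpa [hL] using (((hasDerivAt_id t).smul_const ξ).const_add x₀)
  have hLcont : Continuous L := by continuity
  have hLt : Tendsto L (𝓝 0) (𝓝 x₀) := by
    rw [← hL0]; exact hLcont.tendsto 0
  -- u differentiable near x₀
  obtain ⟨s, hs, hus⟩ : ∃ s ∈ 𝓝 x₀, ContDiffOn ℝ 2 u s := hu.contDiffOn le_rfl (by simp)
  rcases mem_nhds_iff.1 hs with ⟨t, hts, hto, hxt⟩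
  have hdiff : ∀ᶠ y in 𝓝 x₀, DifferentiableAt ℝ u y := by
    filter_upwards [hto.mem_nhds hxt] with y hy
    exact ((hus.mono hts y hy).contDiffAt (hto.mem_nhds hy)).differentiableAt two_ne_zero
  set f : ℝ → ℝ := fun t => u (L t) with hf
  set g : ℝ → ℝ := fun t => fderiv ℝ u (L t) ξ with hgdef
  have hfd : ∀ᶠ t in 𝓝 (0:ℝ), HasDerivAt f (g t) t := by
    filter_upwards [hLt.eventually hdiff] with t ht
    exact (ht.hasFDerivAt.comp_hasDerivAt t (hLd t))
  have hfdu : DifferentiableAt ℝ (fderiv ℝ u) x₀ :=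
    (hu.fderiv_right (m := 1) (by norm_num)).differentiableAt one_ne_zero
  have hcomp : HasDerivAt (fun t => fderiv ℝ u (L t)) (fderiv ℝ (fderiv ℝ u) x₀ ξ) 0 := by
    have h1 : HasFDerivAt (fderiv ℝ u) (fderiv ℝ (fderiv ℝ u) x₀) (L 0) := by
      rw [hL0]; exact hfdu.hasFDerivAt
    exact h1.comp_hasDerivAt 0 (hLd 0)
  have hg : HasDerivAt g (fderiv ℝ (fderiv ℝ u) x₀ ξ ξ) 0 := by
    have := hcomp.clm_apply (hasDerivAt_const (0:ℝ) ξ)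
    simpa [hL0] using this
  have hmaxf : IsLocalMax f 0 := by
    have : ∀ᶠ t in 𝓝 (0:ℝ), u (L t) ≤ u x₀ := hLt.eventually hmax
    simpa [hf, IsLocalMax, IsMaxFilter, hL0] using this
  exact deriv2_nonpos_of_localmax hfd hg hmaxf



lemma psd_trace_nonneg {n : ℕ} {M : Matrix (Fin n) (Fin n) ℝ} (hM : M.PosSemidef) :
    0 ≤ M.trace := by
  rw [Matrix.trace]
  apply Finset.sum_nonneg
  intro i _
  exact hM.diag_nonneg

lemma trace_pair_nonpos {n : ℕ} (A H : Matrix (Fin n) (Fin n) ℝ)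
    (hA : ∀ ξ : Fin n → ℝ, 0 ≤ ∑ i, ∑ j, A i j * ξ i * ξ j)
    (hHsymm : ∀ i j, H i j = H j i)
    (hH : ∀ ξ : Fin n → ℝ, ∑ i, ∑ j, ξ i * ξ j * H i j ≤ 0) :
    ∑ i, ∑ j, A i j * H i j ≤ 0 := by
  set S : Matrix (Fin n) (Fin n) ℝ := (1/2 : ℝ) • (A + Aᵀ) with hSdef
  have hSapp : ∀ i j, S i j = (1/2 : ℝ) * (A i j + A j i) := by
    intro i j; simp [hSdef]; ring
  have hSsym : S.IsHermitian := by
    ext i j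
    simp only [Matrix.conjTranspose_apply, star_trivial, hSapp]
    ring
  have hSpsd : S.PosSemidef := by
    refine Matrix.PosSemidef.of_dotProduct_mulVec_nonneg hSsym fun x => ?_
    have expand : star x ⬝ᵥ (S *ᵥ x) = ∑ i, ∑ j, x i * S i j * x j := by
      simp [dotProduct, Matrix.mulVec, Finset.mul_sum, mul_assoc]
    rw [expand]
    have e2 : ∀ i j, x i * S i j * x j
        = ((A i j * x i * x j) + (A j i * x j * x i)) / 2 := by
      intro i j; rw [hSapp]; ring
    have e3 : ∑ i, ∑ j, x i * S i j * x j
        = ((∑ i, ∑ j, A i j * x i * x j) + ∑ i, ∑ j, A j i * x j * x i) / 2 := by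
      simp only [e2, add_div, Finset.sum_div, Finset.sum_add_distrib]
    have e4 : ∑ i, ∑ j, A j i * x j * x i = ∑ i, ∑ j, A i j * x i * x j :=
      Finset.sum_comm
    rw [e3, e4]
    have := hA x
    linarith
  set N : Matrix (Fin n) (Fin n) ℝ := -H with hNdef
  have hNsym : N.IsHermitian := by
    ext i j
    simp only [Matrix.conjTranspose_apply, star_trivial, hNdef, Matrix.neg_apply]
    rw [hHsymm]
  have hNpsd : N.PosSemidef := by
    refine Matrix.PosSemidef.of_dotProduct_mulVec_nonneg hNsym fun x => ?_
    have expand : star x ⬝ᵥ (N *ᵥ x) = ∑ i, ∑ j, x i * N i j * x j := by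
      simp [dotProduct, Matrix.mulVec, Finset.mul_sum, mul_assoc]
    rw [expand]
    have e2 : ∑ i, ∑ j, x i * N i j * x j = -∑ i, ∑ j, x i * x j * H i j := by
      rw [← Finset.sum_neg_distrib]
      congr 1; ext i
      rw [← Finset.sum_neg_distrib]
      congr 1; ext j
      simp [hNdef]; ring
    rw [e2]
    have := hH x
    linarith
  -- reduce goal to trace of S * H
  have step1 : ∑ i, ∑ j, A i j * H i j = (S * H).trace := by
    have tr : (S * H).trace = ∑ i, ∑ j, S i j * H i j := by
      simp only [Matrix.trace, Matrix.diag, Matrix.mul_apply]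
      congr 1; ext i
      congr 1; ext j
      rw [hHsymm]
    rw [tr]
    have e2 : ∀ i j, S i j * H i j
        = ((A i j * H i j) + (A j i * H j i)) / 2 := by
      intro i j; rw [hSapp, hHsymm i j]; ring
    have e3 : ∑ i, ∑ j, S i j * H i j
        = ((∑ i, ∑ j, A i j * H i j) + ∑ i, ∑ j, A j i * H j i) / 2 := by
      simp only [e2, add_div, Finset.sum_div, Finset.sum_add_distrib]
    have e4 : ∑ i, ∑ j, A j i * H j i = ∑ i, ∑ j, A i j * H i j :=
      Finset.sum_comm
    rw [e3, e4]
    ring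
  rw [step1]
  have hHN : H = -N := by simp [hNdef]
  have : (S * H).trace = -(S * N).trace := by
    rw [hHN]; simp [Matrix.mul_neg]
  rw [this, neg_nonpos]
  set R := CFC.sqrt N with hRdef
  have hRR : R * R = N := CFC.sqrt_mul_sqrt_self N (Matrix.nonneg_iff_posSemidef.mpr hNpsd)
  have hRpsd : R.PosSemidef := Matrix.nonneg_iff_posSemidef.mp (CFC.sqrt_nonneg N)
  have hRH : Rᴴ = R := hRpsd.1
  have : (S * N).trace = (R * S * R).trace := by
    rw [← hRR, show S * (R * R) = (S * R) * R by rw [Matrix.mul_assoc],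
      Matrix.trace_mul_comm, Matrix.mul_assoc]
  rw [this]
  have hpsd : (R * S * Rᴴ).PosSemidef := hSpsd.mul_mul_conjTranspose_same R
  rw [hRH] at hpsd
  exact psd_trace_nonneg hpsd


/-- Divergence-form second-order operator
`L v = ∑ i ∂ᵢ (∑ j aᵢⱼ ∂ⱼ v + bᵢ v)`. -/
noncomputable def Ldiv {n : ℕ} (a : Fin n → Fin n → EuclideanSpace ℝ (Fin n) → ℝ)
    (b : Fin n → EuclideanSpace ℝ (Fin n) → ℝ)
    (v : EuclideanSpace ℝ (Fin n) → ℝ) (x : EuclideanSpace ℝ (Fin n)) : ℝ :=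
  ∑ i, fderiv ℝ
    (fun y => (∑ j, a i j y * fderiv ℝ v y (EuclideanSpace.single j 1)) + b i y * v y)
    x (EuclideanSpace.single i 1)

section helpers

variable {n : ℕ} {Ω : Set (EuclideanSpace ℝ (Fin n))}
  {a : Fin n → Fin n → EuclideanSpace ℝ (Fin n) → ℝ}
  {b : Fin n → EuclideanSpace ℝ (Fin n) → ℝ}
  {x₀ : EuclideanSpace ℝ (Fin n)}

-- expansion of a bilinear form in coordinates
lemma bilin_expand (B : EuclideanSpace ℝ (Fin n) →L[ℝ] EuclideanSpace ℝ (Fin n) →L[ℝ] ℝ)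
    (ξ : EuclideanSpace ℝ (Fin n)) :
    B ξ ξ = ∑ i, ∑ j, ξ i * ξ j *
      B (EuclideanSpace.single i 1) (EuclideanSpace.single j 1) := by
  have hξ : ∑ i, ξ i • EuclideanSpace.single i (1:ℝ) = ξ := by
    simpa using (EuclideanSpace.basisFun (Fin n) ℝ).toBasis.sum_repr ξ
  conv_lhs => rw [← hξ]
  rw [map_sum]
  refine Eq.trans ?_ Finset.sum_comm
  refine Finset.sum_congr rfl fun j _ => ?_
  rw [_root_.map_smul, map_sum, ContinuousLinearMap.sum_apply, Finset.smul_sum]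
  refine Finset.sum_congr rfl fun i _ => ?_
  rw [_root_.map_smul, ContinuousLinearMap.smul_apply]
  simp only [smul_eq_mul]
  ring

lemma Ldiv_at_crit (hΩo : IsOpen Ω) (hx₀ : x₀ ∈ Ω)
    (ha : ∀ i j, ContDiffOn ℝ 1 (a i j) Ω) (hb : ∀ i, ContDiffOn ℝ 1 (b i) Ω)
    {u : EuclideanSpace ℝ (Fin n) → ℝ}
    (hu : ContDiffOn ℝ 2 u Ω) (hu0 : u x₀ = 0) (hgrad : fderiv ℝ u x₀ = 0) :
    Ldiv a b u x₀ = ∑ i, ∑ j, a i j x₀ *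
      fderiv ℝ (fderiv ℝ u) x₀ (EuclideanSpace.single i 1) (EuclideanSpace.single j 1) := by
  have hΩn : Ω ∈ 𝓝 x₀ := hΩo.mem_nhds hx₀
  have hu2at : ContDiffAt ℝ 2 u x₀ := hu.contDiffAt hΩn
  have huat : DifferentiableAt ℝ u x₀ := hu2at.differentiableAt two_ne_zero
  have hfdu : DifferentiableAt ℝ (fderiv ℝ u) x₀ :=
    (hu2at.fderiv_right (m := 1) (by norm_num)).differentiableAt one_ne_zero
  have duj : ∀ j : Fin n, DifferentiableAt ℝ
      (fun y => fderiv ℝ u y (EuclideanSpace.single j 1)) x₀ :=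
    fun j => hfdu.clm_apply (differentiableAt_const _)
  have haat : ∀ i j, DifferentiableAt ℝ (a i j) x₀ :=
    fun i j => ((ha i j).contDiffAt hΩn).differentiableAt one_ne_zero
  have hbat : ∀ i, DifferentiableAt ℝ (b i) x₀ :=
    fun i => ((hb i).contDiffAt hΩn).differentiableAt one_ne_zero
  have hGd : ∀ i j, DifferentiableAt ℝ
      (fun y => a i j y * fderiv ℝ u y (EuclideanSpace.single j 1)) x₀ :=
    fun i j => (haat i j).mul (duj j)
  have hfderiv_du : ∀ j : Fin n,
      fderiv ℝ (fun y => fderiv ℝ u y (EuclideanSpace.single j 1)) x₀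
        = (fderiv ℝ (fderiv ℝ u) x₀).flip (EuclideanSpace.single j 1) := by
    intro j
    rw [fderiv_clm_apply hfdu (differentiableAt_const _)]
    simp
  unfold Ldiv
  congr 1; ext i
  rw [fderiv_fun_add (DifferentiableAt.fun_sum (fun j _ => hGd i j))
    (show DifferentiableAt ℝ (fun y => b i y * u y) x₀ from (hbat i).mul huat)]
  rw [fderiv_fun_sum (fun j _ => hGd i j)]
  have hmulbu : fderiv ℝ (fun y => b i y * u y) x₀ = 0 := by
    rw [fderiv_fun_mul (hbat i) huat, hu0, hgrad]
    simp
  have hmulG : ∀ j : Fin n,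
      fderiv ℝ (fun y => a i j y * fderiv ℝ u y (EuclideanSpace.single j 1)) x₀
        = a i j x₀ • ((fderiv ℝ (fderiv ℝ u) x₀).flip (EuclideanSpace.single j 1)) := by
    intro j
    rw [fderiv_fun_mul (haat i j) (duj j), hgrad, hfderiv_du j]
    simp
  simp only [hmulG, hmulbu, ContinuousLinearMap.add_apply, ContinuousLinearMap.zero_apply,
    ContinuousLinearMap.coe_sum', Finset.sum_apply, ContinuousLinearMap.coe_smul',
    Pi.smul_apply, ContinuousLinearMap.flip_apply, smul_eq_mul, add_zero]

lemma Ldiv_sub_smul (hΩo : IsOpen Ω) (hx₀ : x₀ ∈ Ω)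
    (ha : ∀ i j, ContDiffOn ℝ 1 (a i j) Ω) (hb : ∀ i, ContDiffOn ℝ 1 (b i) Ω)
    {v w : EuclideanSpace ℝ (Fin n) → ℝ} (M : ℝ)
    (hv : ContDiffOn ℝ 2 v Ω) (hw : ContDiffOn ℝ 2 w Ω) :
    Ldiv a b (fun y => v y - M * w y) x₀ = Ldiv a b v x₀ - M * Ldiv a b w x₀ := by
  have hΩn : Ω ∈ 𝓝 x₀ := hΩo.mem_nhds hx₀
  have hdv : ∀ y ∈ Ω, DifferentiableAt ℝ v y :=
    fun y hy => (hv.contDiffAt (hΩo.mem_nhds hy)).differentiableAt two_ne_zero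
  have hdw : ∀ y ∈ Ω, DifferentiableAt ℝ w y :=
    fun y hy => (hw.contDiffAt (hΩo.mem_nhds hy)).differentiableAt two_ne_zero
  have hfd : ∀ y ∈ Ω, ∀ j : Fin n,
      fderiv ℝ (fun z => v z - M * w z) y (EuclideanSpace.single j 1)
        = fderiv ℝ v y (EuclideanSpace.single j 1)
          - M * fderiv ℝ w y (EuclideanSpace.single j 1) := by
    intro y hy j
    rw [fderiv_fun_sub (hdv y hy) ((hdw y hy).const_mul M), fderiv_const_mul (hdw y hy) M]
    simp
  -- differentiability of the inner expressions at x₀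
  have hfduv : DifferentiableAt ℝ (fderiv ℝ v) x₀ :=
    ((hv.contDiffAt hΩn).fderiv_right (m := 1) (by norm_num)).differentiableAt one_ne_zero
  have hfduw : DifferentiableAt ℝ (fderiv ℝ w) x₀ :=
    ((hw.contDiffAt hΩn).fderiv_right (m := 1) (by norm_num)).differentiableAt one_ne_zero
  have haat : ∀ i j, DifferentiableAt ℝ (a i j) x₀ :=
    fun i j => ((ha i j).contDiffAt hΩn).differentiableAt one_ne_zero
  have hbat : ∀ i, DifferentiableAt ℝ (b i) x₀ :=
    fun i => ((hb i).contDiffAt hΩn).differentiableAt one_ne_zero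
  have hFv : ∀ i : Fin n, DifferentiableAt ℝ
      (fun y => (∑ j, a i j y * fderiv ℝ v y (EuclideanSpace.single j 1)) + b i y * v y) x₀ := by
    intro i
    exact (DifferentiableAt.fun_sum (fun j _ =>
      (haat i j).mul (hfduv.clm_apply (differentiableAt_const _)))).add
      ((hbat i).mul (hdv x₀ hx₀))
  have hFw : ∀ i : Fin n, DifferentiableAt ℝ
      (fun y => (∑ j, a i j y * fderiv ℝ w y (EuclideanSpace.single j 1)) + b i y * w y) x₀ := by
    intro i
    exact (DifferentiableAt.fun_sum (fun j _ =>
      (haat i j).mul (hfduw.clm_apply (differentiableAt_const _)))).add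
      ((hbat i).mul (hdw x₀ hx₀))
  unfold Ldiv
  have key : ∀ i : Fin n,
      fderiv ℝ (fun y => (∑ j, a i j y * fderiv ℝ (fun z => v z - M * w z) y
          (EuclideanSpace.single j 1)) + b i y * (v y - M * w y)) x₀
        (EuclideanSpace.single i 1)
      = fderiv ℝ (fun y => (∑ j, a i j y * fderiv ℝ v y (EuclideanSpace.single j 1))
          + b i y * v y) x₀ (EuclideanSpace.single i 1)
        - M * fderiv ℝ (fun y => (∑ j, a i j y * fderiv ℝ w y (EuclideanSpace.single j 1))
          + b i y * w y) x₀ (EuclideanSpace.single i 1) := by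
    intro i
    have heq : (fun y => (∑ j, a i j y * fderiv ℝ (fun z => v z - M * w z) y
          (EuclideanSpace.single j 1)) + b i y * (v y - M * w y))
        =ᶠ[𝓝 x₀] (fun y =>
          ((∑ j, a i j y * fderiv ℝ v y (EuclideanSpace.single j 1)) + b i y * v y)
          - M * ((∑ j, a i j y * fderiv ℝ w y (EuclideanSpace.single j 1)) + b i y * w y)) := by
      filter_upwards [hΩn] with y hy
      simp only [hfd y hy]
      have hterm : ∀ x : Fin n, a i x y *
          (fderiv ℝ v y (EuclideanSpace.single x 1) - M * fderiv ℝ w y (EuclideanSpace.single x 1))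
          = a i x y * fderiv ℝ v y (EuclideanSpace.single x 1)
            - M * (a i x y * fderiv ℝ w y (EuclideanSpace.single x 1)) := fun x => by ring
      simp only [hterm, Finset.sum_sub_distrib, ← Finset.mul_sum]
      ring
    rw [heq.fderiv_eq, fderiv_fun_sub (hFv i) ((hFw i).const_mul M), fderiv_const_mul (hFw i) M]
    simp
  simp only [key]
  rw [Finset.sum_sub_distrib, Finset.mul_sum]

end helpers


/-- Comparison principle (Theorem A.2): `v/w` attains its positive maximum on the boundary
or is no greater than `1`. -/
theorem comparison_principle_two {n : ℕ}
    (Ω : Set (EuclideanSpace ℝ (Fin n)))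
    (hΩo : IsOpen Ω) (hΩb : Bornology.IsBounded Ω) (hΩc : IsConnected Ω)
    (a : Fin n → Fin n → EuclideanSpace ℝ (Fin n) → ℝ)
    (b : Fin n → EuclideanSpace ℝ (Fin n) → ℝ)
    (ha : ∀ i j, ContDiffOn ℝ 1 (a i j) Ω ∧ ContinuousOn (a i j) (closure Ω))
    (hb : ∀ i, ContDiffOn ℝ 1 (b i) Ω ∧ ContinuousOn (b i) (closure Ω))
    (lam : ℝ) (hlam : 0 < lam)
    (hell : ∀ x ∈ Ω, ∀ ξ : EuclideanSpace ℝ (Fin n),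
      lam * ‖ξ‖ ^ 2 ≤ ∑ i, ∑ j, a i j x * ξ i * ξ j)
    (v w : EuclideanSpace ℝ (Fin n) → ℝ)
    (hv : ContDiffOn ℝ 2 v Ω) (hvc : ContinuousOn v (closure Ω))
    (hw : ContDiffOn ℝ 2 w Ω) (hwc : ContinuousOn w (closure Ω))
    (hLvw : ∀ x ∈ Ω, Ldiv a b w x ≤ Ldiv a b v x)
    (hLw : ∀ x ∈ Ω, Ldiv a b w x < 0)
    (hwpos : ∀ x ∈ closure Ω, 0 < w x) :
    sSup ((fun x => v x / w x) '' Ω) ≤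
      max (sSup ((fun x => max (v x) 0 / w x) '' frontier Ω)) 1 := by
  classical
  have ha1 : ∀ i j, ContDiffOn ℝ 1 (a i j) Ω := fun i j => (ha i j).1
  have hb1 : ∀ i, ContDiffOn ℝ 1 (b i) Ω := fun i => (hb i).1
  obtain ⟨x₁, hx₁⟩ := hΩc.nonempty
  have hcomp : IsCompact (closure Ω) :=
    Metric.isCompact_of_isClosed_isBounded isClosed_closure hΩb.closure
  have hVcont : ContinuousOn (fun x => v x / w x) (closure Ω) :=
    hvc.div hwc (fun x hx => (hwpos x hx).ne')
  have hne : (closure Ω).Nonempty := ⟨x₁, subset_closure hx₁⟩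
  obtain ⟨x₀, hx₀cl, hx₀max⟩ := hcomp.exists_isMaxOn hne hVcont
  set M := v x₀ / w x₀ with hMdef
  apply csSup_le (hΩc.nonempty.image _)
  rintro r ⟨x, hx, rfl⟩
  have hVle : v x / w x ≤ M := hx₀max (subset_closure hx)
  rcases le_or_gt M 1 with hM | hM
  · exact le_trans hVle (le_trans hM (le_max_right _ _))
  by_cases hx₀Ω : x₀ ∈ Ω
  swap
  · -- maximum attained on the boundary
    have hfr : x₀ ∈ frontier Ω := by
      rw [frontier, hΩo.interior_eq]; exact ⟨hx₀cl, hx₀Ω⟩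
    have hfrc : IsCompact (frontier Ω) :=
      hcomp.of_isClosed_subset isClosed_frontier frontier_subset_closure
    have hcont2 : ContinuousOn (fun x => max (v x) 0 / w x) (frontier Ω) := by
      apply ContinuousOn.div
      · exact fun y hy => ((hvc.mono frontier_subset_closure) y hy).max continuousWithinAt_const
      · exact hwc.mono frontier_subset_closure
      · exact fun y hy => (hwpos y (frontier_subset_closure hy)).ne'
    have hbdd : BddAbove ((fun x => max (v x) 0 / w x) '' frontier Ω) :=
      hfrc.bddAbove_image hcont2
    have h1 : M ≤ max (v x₀) 0 / w x₀ := by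
      rw [hMdef]
      gcongr
      · exact (hwpos x₀ hx₀cl).le
      · exact le_max_left _ _
    have h2 : max (v x₀) 0 / w x₀ ≤ sSup ((fun x => max (v x) 0 / w x) '' frontier Ω) :=
      le_csSup hbdd ⟨x₀, hfr, rfl⟩
    exact le_trans hVle (le_trans h1 (le_trans h2 (le_max_left _ _)))
  -- maximum attained in the interior : contradiction
  exfalso
  have hwx₀ : 0 < w x₀ := hwpos x₀ hx₀cl
  set u : EuclideanSpace ℝ (Fin n) → ℝ := fun y => v y - M * w y with hudef
  have hu : ContDiffOn ℝ 2 u Ω := hv.sub (contDiffOn_const.mul hw)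
  have hu0 : u x₀ = 0 := by
    simp only [hudef, hMdef]
    field_simp
    ring
  have hunp : ∀ y ∈ closure Ω, u y ≤ 0 := by
    intro y hy
    have h1 : v y / w y ≤ M := hx₀max hy
    have h2 : 0 < w y := hwpos y hy
    have h3 := (div_le_iff₀ h2).1 h1
    simp only [hudef]
    linarith
  have hΩn : Ω ∈ 𝓝 x₀ := hΩo.mem_nhds hx₀Ω
  have hmax : IsLocalMax u x₀ := by
    have : ∀ᶠ y in 𝓝 x₀, u y ≤ u x₀ := by
      filter_upwards [hΩn] with y hy
      rw [hu0]
      exact hunp y (subset_closure hy)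
    exact this
  have hgrad : fderiv ℝ u x₀ = 0 := hmax.fderiv_eq_zero
  have hu2at : ContDiffAt ℝ 2 u x₀ := hu.contDiffAt hΩn
  have hquad := fun ξ => quadform_nonpos_of_localmax hu2at hmax ξ
  have hsymm : IsSymmSndFDerivAt ℝ u x₀ := hu2at.isSymmSndFDerivAt (by simp)
  have hLu : Ldiv a b u x₀ = ∑ i, ∑ j, a i j x₀ *
      fderiv ℝ (fderiv ℝ u) x₀ (EuclideanSpace.single i 1) (EuclideanSpace.single j 1) :=
    Ldiv_at_crit hΩo hx₀Ω ha1 hb1 hu hu0 hgrad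
  have hlin : Ldiv a b u x₀ = Ldiv a b v x₀ - M * Ldiv a b w x₀ :=
    Ldiv_sub_smul hΩo hx₀Ω ha1 hb1 M hv hw
  have hpos : 0 < Ldiv a b u x₀ := by
    rw [hlin]
    have h1 := hLvw x₀ hx₀Ω
    have h2 := hLw x₀ hx₀Ω
    nlinarith
  have hA : ∀ ξ : Fin n → ℝ, 0 ≤ ∑ i, ∑ j, a i j x₀ * ξ i * ξ j := by
    intro ξ
    have h := hell x₀ hx₀Ω ((WithLp.equiv 2 (Fin n → ℝ)).symm ξ)
    have hn0 : 0 ≤ lam * ‖(WithLp.equiv 2 (Fin n → ℝ)).symm ξ‖ ^ 2 := by positivity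
    have := le_trans hn0 h
    simpa using this
  have hHsymm : ∀ i j : Fin n,
      fderiv ℝ (fderiv ℝ u) x₀ (EuclideanSpace.single i 1) (EuclideanSpace.single j 1)
        = fderiv ℝ (fderiv ℝ u) x₀ (EuclideanSpace.single j 1) (EuclideanSpace.single i 1) :=
    fun i j => hsymm.eq _ _
  have hH : ∀ ξ : Fin n → ℝ, ∑ i, ∑ j, ξ i * ξ j *
      fderiv ℝ (fderiv ℝ u) x₀ (EuclideanSpace.single i 1) (EuclideanSpace.single j 1) ≤ 0 := by
    intro ξ
    have h := hquad ((WithLp.equiv 2 (Fin n → ℝ)).symm ξ)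
    rw [bilin_expand] at h
    simpa using h
  have hfinal := trace_pair_nonpos (fun i j => a i j x₀)
    (fun i j => fderiv ℝ (fderiv ℝ u) x₀ (EuclideanSpace.single i 1) (EuclideanSpace.single j 1))
    hA hHsymm hH
  rw [hLu] at hpos
  linarith
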